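/- Let $R$ be a positive integer and $\eta_s, \eta_t \in \mathbb{Z}[i]$ with $|\eta_s|^2 = |\eta_t|^2 = R^2$, such that $\eta_s \overline{\eta_t}$ is divisible by $R$ in $\mathbb{Z}[i]$. Then the Euclidean distance between the complex numbers $\eta_s^2/R$ and $\eta_t^2/R$ is a non-negative integer. -/

import Mathlib

open Complex GaussianInt

theorem circle_points_integral_distance (R : ℤ) (hR : 0 < R)
    (ηs ηt : GaussianInt)
    (hs : Zsqrtd.norm ηs = R ^ 2) (ht : Zsqrtd.norm ηt = R ^ 2)
    (hdvd : (R : GaussianInt) ∣ ηs * star ηt) :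
    ∃ n : ℕ, dist ((GaussianInt.toComplex ηs) ^ 2 / (R : ℂ))
      ((GaussianInt.toComplex ηt) ^ 2 / (R : ℂ)) = n := by
  obtain ⟨u, hu⟩ := hdvd
  refine ⟨2 * u.im.natAbs, ?_⟩
  set zs := GaussianInt.toComplex ηs with hzs
  set zt := GaussianInt.toComplex ηt with hzt
  set w := GaussianInt.toComplex u with hwdef
  have hRR : (R : ℝ) ≠ 0 := Int.cast_ne_zero.mpr hR.ne'
  have hR0 : (R : ℂ) ≠ 0 := by exact_mod_cast Int.cast_ne_zero.mpr hR.ne'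
  have hconj : zs * (starRingEnd ℂ) zt = (R : ℂ) * w := by
    have := congrArg GaussianInt.toComplex hu
    simpa [toComplex_mul, toComplex_star, map_mul, map_intCast] using this
  have hns : zs * (starRingEnd ℂ) zs = ((R : ℂ))^2 := by
    have h := intCast_complex_norm ηs
    rw [hs] at h
    rw [Complex.mul_conj]
    push_cast at h ⊢
    rw [← h]
  have hnt : zt * (starRingEnd ℂ) zt = ((R : ℂ))^2 := by
    have h := intCast_complex_norm ηt
    rw [ht] at h
    rw [Complex.mul_conj]
    push_cast at h ⊢
    rw [← h]
  have hw : w * (starRingEnd ℂ) w = ((R : ℂ))^2 := by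
    have h1 : ((R:ℂ) * w) * (starRingEnd ℂ) ((R:ℂ) * w) = (R:ℂ)^2 * ((R:ℂ)^2) := by
      rw [← hconj]
      have : (starRingEnd ℂ) (zs * (starRingEnd ℂ) zt) = (starRingEnd ℂ) zs * zt := by
        simp [map_mul]
      rw [this]
      linear_combination zt * (starRingEnd ℂ) zt * hns + (R:ℂ)^2 * hnt
    have h2 : (R:ℂ)^2 * (w * (starRingEnd ℂ) w) = (R:ℂ)^2 * ((R:ℂ)^2) := by
      rw [← h1]; simp [map_mul]; ring
    exact mul_left_cancel₀ (pow_ne_zero 2 hR0) h2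
  have hzt0 : zt ≠ 0 := by
    intro h
    rw [h] at hnt
    simp at hnt
    exact hR0 (pow_eq_zero_iff (by norm_num) |>.mp hnt.symm) 
  have hczt0 : (starRingEnd ℂ) zt ≠ 0 := by simpa using hzt0
  have key : zs^2 / (R:ℂ) - zt^2 / (R:ℂ)
      = (R:ℂ) * w * (w - (starRingEnd ℂ) w) / ((starRingEnd ℂ) zt)^2 := by
    rw [div_sub_div_same, div_eq_div_iff hR0 (pow_ne_zero 2 hczt0)]
    linear_combination (zs * (starRingEnd ℂ) zt + (R:ℂ)*w) * hconj
      - (zt * (starRingEnd ℂ) zt + (R:ℂ)^2) * hnt + (R:ℂ)^2 * hw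
  rw [dist_eq, key]
  rw [norm_div, norm_mul, norm_mul, norm_pow]
  have habsw : ‖w‖ = (R : ℝ) := by
    have : ‖w‖ ^ 2 = (R:ℝ)^2 := by
      have : ‖w * (starRingEnd ℂ) w‖ = ‖((R : ℂ))^2‖ := by rw [hw]
      rwa [norm_mul, Complex.norm_conj, ← sq,
        norm_pow, Complex.norm_intCast, abs_of_pos (by exact_mod_cast hR)] at this
    nlinarith [_root_.norm_nonneg w, (by exact_mod_cast hR : (0:ℝ) < (R:ℝ))]
  have habszt : ‖(starRingEnd ℂ) zt‖ = (R : ℝ) := by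
    have : ‖zt‖ ^ 2 = (R:ℝ)^2 := by
      have : ‖zt * (starRingEnd ℂ) zt‖ = ‖((R : ℂ))^2‖ := by rw [hnt]
      rwa [norm_mul, Complex.norm_conj, ← sq, norm_pow, Complex.norm_intCast,
        abs_of_pos (by exact_mod_cast hR)] at this
    rw [Complex.norm_conj]
    nlinarith [_root_.norm_nonneg zt, (by exact_mod_cast hR : (0:ℝ) < (R:ℝ))]
  have hsub : ‖w - (starRingEnd ℂ) w‖ = 2 * |(u.im : ℝ)| := by
    have him : w.im = (u.im : ℝ) := (intCast_im u).symm
    rw [Complex.sub_conj, him]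
    simp [abs_mul]
  rw [habsw, habszt, hsub, Complex.norm_intCast, abs_of_pos (by exact_mod_cast hR)]
  push_cast [Nat.cast_natAbs]
  field_simp
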